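/- Upper bound by sparsity: let G = (V,E) be a graph (ordered edges) with maximum vertex degree d, and let M = sup over nonempty I ⊆ V of min{p, |E ∩ (I×I)|}/|I|. Then for any E₁ ⊆ E with |E₁| ≤ p and any unit vectors s, t, Σ_{(i,j)∈E₁} |s_i t_j| ≤ C √(dM) for a universal constant C. -/

import Mathlib

open scoped Classical
open Finset



/-- dyadic level of a real number -/
noncomputable def lvl (x : ℝ) : ℕ :=
  if h : ∃ k : ℕ, ((2:ℝ)⁻¹)^(k+1) < |x| then Nat.find h else 0

lemma lvl_lower {x : ℝ} (hx : x ≠ 0) : ((2:ℝ)⁻¹)^(lvl x + 1) < |x| := by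
  have hex : ∃ k : ℕ, ((2:ℝ)⁻¹)^(k+1) < |x| := by
    obtain ⟨n, hn⟩ := exists_pow_lt_of_lt_one (abs_pos.mpr hx) (by norm_num : (2:ℝ)⁻¹ < 1)
    exact ⟨n, lt_of_le_of_lt (pow_le_pow_of_le_one (by norm_num) (by norm_num) (Nat.le_succ n)) hn⟩
  rw [lvl, dif_pos hex]
  exact Nat.find_spec hex

lemma lvl_upper {x : ℝ} (hx1 : |x| ≤ 1) : |x| ≤ ((2:ℝ)⁻¹)^(lvl x) := by
  rw [lvl]
  by_cases hex : ∃ k : ℕ, ((2:ℝ)⁻¹)^(k+1) < |x|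
  · rw [dif_pos hex]
    rcases hk : Nat.find hex with _ | m
    · simpa using hx1
    · have : ¬ ((2:ℝ)⁻¹ ^ (m + 1) < |x|) := Nat.find_min hex (by omega)
      push_neg at this
      simpa [hk] using this
  · rw [dif_neg hex]
    simpa using hx1

/-- geometric sum bounded by twice the max member value -/
lemma sum_half_pow_le (S : Finset ℕ) (c : ℝ) (hc : 0 ≤ c)
    (h : ∀ l ∈ S, ((2:ℝ)⁻¹)^l ≤ c) : ∑ l ∈ S, ((2:ℝ)⁻¹)^l ≤ 2 * c := by
  rcases S.eq_empty_or_nonempty with rfl | hS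
  · simp; positivity
  · set l₀ := S.min' hS with hl₀
    have hsub : S ⊆ Finset.Ico l₀ (S.max' hS + 1) := by
      intro l hl
      exact Finset.mem_Ico.mpr ⟨S.min'_le l hl, Nat.lt_succ_of_le (S.le_max' l hl)⟩
    calc ∑ l ∈ S, ((2:ℝ)⁻¹)^l
        ≤ ∑ l ∈ Finset.Ico l₀ (S.max' hS + 1), ((2:ℝ)⁻¹)^l := by
          apply Finset.sum_le_sum_of_subset_of_nonneg hsub
          intro i _ _; positivity
      _ = ∑ j ∈ Finset.range (S.max' hS + 1 - l₀), ((2:ℝ)⁻¹)^(l₀ + j) := by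
          rw [Finset.sum_Ico_eq_sum_range]
      _ = ((2:ℝ)⁻¹)^l₀ * ∑ j ∈ Finset.range (S.max' hS + 1 - l₀), ((2:ℝ)⁻¹)^j := by
          rw [Finset.mul_sum]; exact Finset.sum_congr rfl fun j _ => pow_add _ _ _
      _ ≤ ((2:ℝ)⁻¹)^l₀ * 2 := by
          apply mul_le_mul_of_nonneg_left _ (by positivity)
          simpa [one_div] using sum_geometric_two_le (S.max' hS + 1 - l₀)
      _ ≤ c * 2 := by
          apply mul_le_mul_of_nonneg_right (h l₀ (S.min'_mem hS)) (by norm_num)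
      _ = 2 * c := by ring

/-- the quadratic level-count bound -/
lemma quad_bound {V : Type} [Fintype V] (s : V → ℝ) (hs1 : ∑ v, s v ^ 2 ≤ 1) (N : ℕ) :
    ∑ k ∈ range N, ((univ.filter fun i => s i ≠ 0 ∧ lvl (s i) = k).card : ℝ) * ((2:ℝ)⁻¹)^k * ((2:ℝ)⁻¹)^k ≤ 4 := by
  have hpt : ∀ k ∈ range N, ((univ.filter fun i => s i ≠ 0 ∧ lvl (s i) = k).card : ℝ) * ((2:ℝ)⁻¹)^k * ((2:ℝ)⁻¹)^k
      ≤ ∑ i ∈ univ.filter fun i => s i ≠ 0 ∧ lvl (s i) = k, 4 * s i ^ 2 := by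
    intro k _
    have : ((univ.filter fun i => s i ≠ 0 ∧ lvl (s i) = k).card : ℝ) * ((2:ℝ)⁻¹)^k * ((2:ℝ)⁻¹)^k
        = ∑ i ∈ univ.filter fun i => s i ≠ 0 ∧ lvl (s i) = k, ((2:ℝ)⁻¹)^k * ((2:ℝ)⁻¹)^k := by
      rw [Finset.sum_const, nsmul_eq_mul, mul_assoc]
    rw [this]
    apply Finset.sum_le_sum
    intro i hi
    rw [Finset.mem_filter] at hi
    obtain ⟨-, hi0, hik⟩ := hi
    have hl := lvl_lower hi0
    rw [hik] at hl
    have h2 : ((2:ℝ)⁻¹)^k = 2 * ((2:ℝ)⁻¹)^(k+1) := by rw [pow_succ]; ring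
    have habs : ((2:ℝ)⁻¹)^(k+1) < |s i| := hl
    nlinarith [abs_nonneg (s i), sq_abs (s i), pow_nonneg (by norm_num : (0:ℝ) ≤ 2⁻¹) (k+1)]
  calc ∑ k ∈ range N, ((univ.filter fun i => s i ≠ 0 ∧ lvl (s i) = k).card : ℝ) * ((2:ℝ)⁻¹)^k * ((2:ℝ)⁻¹)^k
      ≤ ∑ k ∈ range N, ∑ i ∈ univ.filter fun i => s i ≠ 0 ∧ lvl (s i) = k, 4 * s i ^ 2 :=
        Finset.sum_le_sum hpt
    _ = ∑ i ∈ (range N).biUnion (fun k => univ.filter fun i => s i ≠ 0 ∧ lvl (s i) = k), 4 * s i ^ 2 := by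
        rw [Finset.sum_biUnion]
        intro a _ b _ hab
        simp only [Finset.disjoint_left, Finset.mem_filter]
        rintro i ⟨-, -, ha⟩ ⟨-, -, hb⟩
        exact hab (ha ▸ hb ▸ rfl)
    _ ≤ ∑ i, 4 * s i ^ 2 := by
        apply Finset.sum_le_sum_of_subset_of_nonneg (Finset.subset_univ _)
        intro i _ _; positivity
    _ = 4 * ∑ v, s v ^ 2 := by rw [Finset.mul_sum]
    _ ≤ 4 := by linarith


lemma T_bound (N : ℕ) (lam : ℝ) (hlam : 0 < lam) (P : ℕ × ℕ → Prop) [DecidablePred P] (n : ℕ → ℝ)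
    (hn : ∀ k, 0 ≤ n k)
    (hband : ∀ k l, P (k,l) → ((2:ℝ)⁻¹)^l ≤ 2 * ((2:ℝ)⁻¹)^k / lam)
    (hquad : ∑ k ∈ range N, n k * ((2:ℝ)⁻¹)^k * ((2:ℝ)⁻¹)^k ≤ 4) :
    ∑ p ∈ (range N ×ˢ range N).filter P, n p.1 * (((2:ℝ)⁻¹)^p.1 * ((2:ℝ)⁻¹)^p.2)
      ≤ 16 / lam := by
  have h0 : (0:ℝ) ≤ (2:ℝ)⁻¹ := by norm_num
  calc ∑ p ∈ (range N ×ˢ range N).filter P, n p.1 * (((2:ℝ)⁻¹)^p.1 * ((2:ℝ)⁻¹)^p.2)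
      = ∑ p ∈ range N ×ˢ range N,
          if P p then n p.1 * (((2:ℝ)⁻¹)^p.1 * ((2:ℝ)⁻¹)^p.2) else 0 := Finset.sum_filter _ _
    _ = ∑ k ∈ range N, ∑ l ∈ range N,
          if P (k,l) then n k * (((2:ℝ)⁻¹)^k * ((2:ℝ)⁻¹)^l) else 0 := by rw [Finset.sum_product]
    _ = ∑ k ∈ range N, n k * ((2:ℝ)⁻¹)^k *
          ∑ l ∈ (range N).filter (fun l => P (k,l)), ((2:ℝ)⁻¹)^l := by
        refine Finset.sum_congr rfl fun k _ => ?_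
        rw [← Finset.sum_filter, Finset.mul_sum]
        refine Finset.sum_congr rfl fun l _ => by ring
    _ ≤ ∑ k ∈ range N, n k * ((2:ℝ)⁻¹)^k * (2 * (2 * ((2:ℝ)⁻¹)^k / lam)) := by
        refine Finset.sum_le_sum fun k _ => ?_
        refine mul_le_mul_of_nonneg_left ?_ (mul_nonneg (hn k) (by positivity))
        refine sum_half_pow_le _ _ (by positivity) fun l hl => ?_
        exact hband k l (Finset.mem_filter.mp hl).2
    _ = (4 / lam) * ∑ k ∈ range N, n k * ((2:ℝ)⁻¹)^k * ((2:ℝ)⁻¹)^k := by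
        rw [Finset.mul_sum]
        refine Finset.sum_congr rfl fun k _ => ?_
        field_simp
        ring
    _ ≤ (4 / lam) * 4 := by
        refine mul_le_mul_of_nonneg_left hquad (by positivity)
    _ = 16 / lam := by field_simp; ring

lemma light_bound {α : Type} (F E : Finset α) (hFE : F ⊆ E) (u w : α → ℝ) (lam d : ℝ)
    (hlam : 0 ≤ lam) (hE : ∑ e ∈ E, u e ^ 2 ≤ d)
    (h : ∀ e ∈ F, |w e| ≤ lam * |u e|) :
    ∑ e ∈ F, |u e| * |w e| ≤ lam * d := by
  calc ∑ e ∈ F, |u e| * |w e|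
      ≤ ∑ e ∈ F, lam * u e ^ 2 := by
        refine Finset.sum_le_sum fun e he => ?_
        have h1 := h e he
        have h2 : |u e| * |w e| ≤ |u e| * (lam * |u e|) :=
          mul_le_mul_of_nonneg_left h1 (abs_nonneg _)
        calc |u e| * |w e| ≤ |u e| * (lam * |u e|) := h2
          _ = lam * (|u e| * |u e|) := by ring
          _ = lam * u e ^ 2 := by rw [abs_mul_abs_self, sq]
    _ = lam * ∑ e ∈ F, u e ^ 2 := (Finset.mul_sum _ _ _).symm
    _ ≤ lam * ∑ e ∈ E, u e ^ 2 := by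
        refine mul_le_mul_of_nonneg_left ?_ hlam
        exact Finset.sum_le_sum_of_subset_of_nonneg hFE fun e _ _ => sq_nonneg _
    _ ≤ lam * d := mul_le_mul_of_nonneg_left hE hlam

lemma core {V : Type} [Fintype V] (E₁ : Finset (V × V)) (s t : V → ℝ) (d M : ℝ)
    (hd : 0 < d) (hM : 0 < M)
    (hs1 : ∑ v, s v ^ 2 ≤ 1) (ht1 : ∑ v, t v ^ 2 ≤ 1)
    (hds : ∑ e ∈ E₁, s e.1 ^ 2 ≤ d) (hdt : ∑ e ∈ E₁, t e.2 ^ 2 ≤ d)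
    (hcnt : ∀ A B : Finset V, ((E₁.filter fun e => e.1 ∈ A ∧ e.2 ∈ B).card : ℝ)
      ≤ M * (A.card + B.card)) :
    ∑ e ∈ E₁, |s e.1 * t e.2| ≤ 34 * Real.sqrt (d * M) := by
  set lam := Real.sqrt (M / d) with hlam_def
  have hlam : 0 < lam := Real.sqrt_pos.mpr (by positivity)
  have hlamd : lam * d = Real.sqrt (d * M) := by
    rw [hlam_def, show d * M = M / d * d ^ 2 by field_simp,
      Real.sqrt_mul (by positivity), Real.sqrt_sq hd.le]
  have hMlam : M / lam = Real.sqrt (d * M) := by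
    have h1 : lam * Real.sqrt (d * M) = M := by
      rw [hlam_def, ← Real.sqrt_mul (by positivity)]
      rw [show M / d * (d * M) = M ^ 2 by field_simp]
      exact Real.sqrt_sq hM.le
    rw [div_eq_iff (ne_of_gt hlam)]
    linarith [h1]
  -- split into three pieces
  have hsplit : ∑ e ∈ E₁, |s e.1 * t e.2|
      = (∑ e ∈ E₁.filter fun e => |t e.2| ≤ lam * |s e.1|, |s e.1 * t e.2|)
      + (∑ e ∈ (E₁.filter fun e => ¬ |t e.2| ≤ lam * |s e.1|).filter
            fun e => |s e.1| ≤ lam * |t e.2|, |s e.1 * t e.2|)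
      + (∑ e ∈ (E₁.filter fun e => ¬ |t e.2| ≤ lam * |s e.1|).filter
            fun e => ¬ |s e.1| ≤ lam * |t e.2|, |s e.1 * t e.2|) := by
    rw [add_assoc, Finset.sum_filter_add_sum_filter_not
        ((E₁.filter fun e => ¬ |t e.2| ≤ lam * |s e.1|)) (fun e => |s e.1| ≤ lam * |t e.2|),
      Finset.sum_filter_add_sum_filter_not]
  -- bound piece 1
  have hB1 : (∑ e ∈ E₁.filter fun e => |t e.2| ≤ lam * |s e.1|, |s e.1 * t e.2|)
      ≤ lam * d := by
    rw [show (∑ e ∈ E₁.filter fun e => |t e.2| ≤ lam * |s e.1|, |s e.1 * t e.2|)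
        = ∑ e ∈ E₁.filter fun e => |t e.2| ≤ lam * |s e.1|, |s e.1| * |t e.2| from
      Finset.sum_congr rfl fun e _ => abs_mul _ _]
    exact light_bound _ E₁ (Finset.filter_subset _ _) (fun e => s e.1) (fun e => t e.2)
      lam d hlam.le hds (fun e he => (Finset.mem_filter.mp he).2)
  -- bound piece 2
  have hB2 : (∑ e ∈ (E₁.filter fun e => ¬ |t e.2| ≤ lam * |s e.1|).filter
        fun e => |s e.1| ≤ lam * |t e.2|, |s e.1 * t e.2|) ≤ lam * d := by
    rw [show (∑ e ∈ (E₁.filter fun e => ¬ |t e.2| ≤ lam * |s e.1|).filter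
          fun e => |s e.1| ≤ lam * |t e.2|, |s e.1 * t e.2|)
        = ∑ e ∈ (E₁.filter fun e => ¬ |t e.2| ≤ lam * |s e.1|).filter
          fun e => |s e.1| ≤ lam * |t e.2|, |t e.2| * |s e.1| from
      Finset.sum_congr rfl fun e _ => by rw [abs_mul, mul_comm]]
    exact light_bound _ E₁ ((Finset.filter_subset _ _).trans (Finset.filter_subset _ _))
      (fun e => t e.2) (fun e => s e.1)
      lam d hlam.le hdt (fun e he => (Finset.mem_filter.mp he).2)
  -- piece 3 : the heavy part
  set S₃ := (E₁.filter fun e => ¬ |t e.2| ≤ lam * |s e.1|).filter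
      fun e => ¬ |s e.1| ≤ lam * |t e.2| with hS₃def
  have hS₃E : S₃ ⊆ E₁ := (Finset.filter_subset _ _).trans (Finset.filter_subset _ _)
  have he3 : ∀ e ∈ S₃, lam * |s e.1| < |t e.2| ∧ lam * |t e.2| < |s e.1| := by
    intro e he
    rw [hS₃def, Finset.mem_filter, Finset.mem_filter] at he
    exact ⟨not_le.mp he.1.2, not_le.mp he.2⟩
  have ht0 : ∀ e ∈ S₃, t e.2 ≠ 0 := by
    intro e he
    have h1 := (he3 e he).1
    have : 0 < |t e.2| := lt_of_le_of_lt (by positivity) h1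
    exact abs_pos.mp this
  have hs0 : ∀ e ∈ S₃, s e.1 ≠ 0 := by
    intro e he
    have h2 := (he3 e he).2
    have h3 : 0 < |t e.2| := abs_pos.mpr (ht0 e he)
    have : 0 < |s e.1| := lt_of_le_of_lt (by positivity) h2
    exact abs_pos.mp this
  have habs1 : ∀ v, |s v| ≤ 1 := by
    intro v
    have h2 : s v ^ 2 ≤ 1 :=
      le_trans (Finset.single_le_sum (fun i _ => sq_nonneg (s i)) (Finset.mem_univ v)) hs1
    nlinarith [sq_abs (s v), sq_nonneg (|s v| - 1), abs_nonneg (s v)]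
  have habt1 : ∀ v, |t v| ≤ 1 := by
    intro v
    have h2 : t v ^ 2 ≤ 1 :=
      le_trans (Finset.single_le_sum (fun i _ => sq_nonneg (t i)) (Finset.mem_univ v)) ht1
    nlinarith [sq_abs (t v), sq_nonneg (|t v| - 1), abs_nonneg (t v)]
  set N := (S₃.sup fun e => max (lvl (s e.1)) (lvl (t e.2))) + 1 with hN
  have hNm : ∀ e ∈ S₃, lvl (s e.1) ∈ range N ∧ lvl (t e.2) ∈ range N := by
    intro e he
    constructor
    · exact Finset.mem_range.mpr (Nat.lt_succ_of_le
        ((le_max_left _ _).trans (Finset.le_sup (f := fun e => max (lvl (s e.1)) (lvl (t e.2))) he)))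
    · exact Finset.mem_range.mpr (Nat.lt_succ_of_le
        ((le_max_right _ _).trans (Finset.le_sup (f := fun e => max (lvl (s e.1)) (lvl (t e.2))) he)))
  set A : ℕ → Finset V := fun k => univ.filter fun i => s i ≠ 0 ∧ lvl (s i) = k with hA
  set Bf : ℕ → Finset V := fun l => univ.filter fun j => t j ≠ 0 ∧ lvl (t j) = l with hBf
  set G3 : ℕ × ℕ → Finset (V × V) :=
      fun p => S₃.filter fun e => (lvl (s e.1), lvl (t e.2)) = p with hG3
  set P : ℕ × ℕ → Prop := fun p => (G3 p).Nonempty with hP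
  -- fiberwise decomposition
  have hfib : ∑ e ∈ S₃, |s e.1 * t e.2|
      = ∑ p ∈ range N ×ˢ range N, ∑ e ∈ G3 p, |s e.1 * t e.2| := by
    exact (Finset.sum_fiberwise_of_maps_to
      (fun e he => Finset.mem_product.mpr ⟨(hNm e he).1, (hNm e he).2⟩) _).symm
  -- per fiber facts
  have hG3sub : ∀ p : ℕ × ℕ, G3 p ⊆ E₁.filter fun e => e.1 ∈ A p.1 ∧ e.2 ∈ Bf p.2 := by
    intro p e he
    rw [hG3] at he
    simp only [Finset.mem_filter] at he ⊢
    obtain ⟨heS, heq⟩ := he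
    have h1 : lvl (s e.1) = p.1 := by
      have := congrArg Prod.fst heq; simpa using this
    have h2 : lvl (t e.2) = p.2 := by
      have := congrArg Prod.snd heq; simpa using this
    exact ⟨hS₃E heS, by simp [hA, hs0 e heS, h1], by simp [hBf, ht0 e heS, h2]⟩
  have hcard : ∀ p : ℕ × ℕ, ((G3 p).card : ℝ) ≤ M * ((A p.1).card + (Bf p.2).card) := by
    intro p
    refine le_trans ?_ (hcnt (A p.1) (Bf p.2))
    exact_mod_cast Nat.cast_le.mpr (Finset.card_le_card (hG3sub p))
  have hinner : ∀ p : ℕ × ℕ, ∑ e ∈ G3 p, |s e.1 * t e.2|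
      ≤ ((G3 p).card : ℝ) * (((2:ℝ)⁻¹)^p.1 * ((2:ℝ)⁻¹)^p.2) := by
    intro p
    have hbd : ∀ e ∈ G3 p, |s e.1 * t e.2| ≤ ((2:ℝ)⁻¹)^p.1 * ((2:ℝ)⁻¹)^p.2 := by
      intro e he
      rw [hG3, Finset.mem_filter] at he
      obtain ⟨heS, heq⟩ := he
      have h1 : lvl (s e.1) = p.1 := by
        have := congrArg Prod.fst heq; simpa using this
      have h2 : lvl (t e.2) = p.2 := by
        have := congrArg Prod.snd heq; simpa using this
      rw [abs_mul]
      have hu : |s e.1| ≤ ((2:ℝ)⁻¹)^p.1 := h1 ▸ lvl_upper (habs1 e.1)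
      have hv : |t e.2| ≤ ((2:ℝ)⁻¹)^p.2 := h2 ▸ lvl_upper (habt1 e.2)
      exact mul_le_mul hu hv (abs_nonneg _) (by positivity)
    have := Finset.sum_le_card_nsmul (G3 p) (fun e => |s e.1 * t e.2|)
      ((((2:ℝ)⁻¹)^p.1 * ((2:ℝ)⁻¹)^p.2)) hbd
    simpa [nsmul_eq_mul] using this
  -- band conditions
  have hband1 : ∀ k l, P (k,l) → ((2:ℝ)⁻¹)^l ≤ 2 * ((2:ℝ)⁻¹)^k / lam := by
    intro k l hp
    obtain ⟨e, he⟩ := hp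
    rw [hG3, Finset.mem_filter] at he
    obtain ⟨heS, heq⟩ := he
    have h1 : lvl (s e.1) = k := by have := congrArg Prod.fst heq; simpa using this
    have h2 : lvl (t e.2) = l := by have := congrArg Prod.snd heq; simpa using this
    have hup : |s e.1| ≤ ((2:ℝ)⁻¹)^k := h1 ▸ lvl_upper (habs1 e.1)
    have hlo : ((2:ℝ)⁻¹)^(l+1) < |t e.2| := h2 ▸ lvl_lower (ht0 e heS)
    have hlt := (he3 e heS).2
    have hkey : lam * ((2:ℝ)⁻¹)^(l+1) < ((2:ℝ)⁻¹)^k := by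
      calc lam * ((2:ℝ)⁻¹)^(l+1) < lam * |t e.2| := by
            exact mul_lt_mul_of_pos_left hlo hlam
        _ < |s e.1| := hlt
        _ ≤ ((2:ℝ)⁻¹)^k := hup
    rw [le_div_iff₀ hlam]
    have hps : ((2:ℝ)⁻¹)^(l+1) = ((2:ℝ)⁻¹)^l * 2⁻¹ := pow_succ _ _
    nlinarith [hkey]
  have hband2 : ∀ l k, P (k,l) → ((2:ℝ)⁻¹)^k ≤ 2 * ((2:ℝ)⁻¹)^l / lam := by
    intro l k hp
    obtain ⟨e, he⟩ := hp
    rw [hG3, Finset.mem_filter] at he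
    obtain ⟨heS, heq⟩ := he
    have h1 : lvl (s e.1) = k := by have := congrArg Prod.fst heq; simpa using this
    have h2 : lvl (t e.2) = l := by have := congrArg Prod.snd heq; simpa using this
    have hup : |t e.2| ≤ ((2:ℝ)⁻¹)^l := h2 ▸ lvl_upper (habt1 e.2)
    have hlo : ((2:ℝ)⁻¹)^(k+1) < |s e.1| := h1 ▸ lvl_lower (hs0 e heS)
    have hlt := (he3 e heS).1
    have hkey : lam * ((2:ℝ)⁻¹)^(k+1) < ((2:ℝ)⁻¹)^l := by
      calc lam * ((2:ℝ)⁻¹)^(k+1) < lam * |s e.1| := by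
            exact mul_lt_mul_of_pos_left hlo hlam
        _ < |t e.2| := hlt
        _ ≤ ((2:ℝ)⁻¹)^l := hup
    rw [le_div_iff₀ hlam]
    have hps : ((2:ℝ)⁻¹)^(k+1) = ((2:ℝ)⁻¹)^k * 2⁻¹ := pow_succ _ _
    nlinarith [hkey]
  -- assemble heavy bound
  have hB3 : ∑ e ∈ S₃, |s e.1 * t e.2| ≤ 32 * (M / lam) := by
    rw [hfib]
    have hrestrict : ∑ p ∈ range N ×ˢ range N, ∑ e ∈ G3 p, |s e.1 * t e.2|
        = ∑ p ∈ (range N ×ˢ range N).filter P, ∑ e ∈ G3 p, |s e.1 * t e.2| := by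
      refine (Finset.sum_subset (Finset.filter_subset _ _) ?_).symm
      intro p _ hp
      rw [Finset.mem_filter] at hp
      push_neg at hp
      have : G3 p = ∅ := Finset.not_nonempty_iff_eq_empty.mp fun hne => by
        by_cases hmem : p ∈ range N ×ˢ range N
        · exact (hp hmem) hne
        · obtain ⟨e, he⟩ := hne
          rw [hG3, Finset.mem_filter] at he
          exact hmem (he.2 ▸ Finset.mem_product.mpr ⟨(hNm e he.1).1, (hNm e he.1).2⟩)
      simp [this]
    rw [hrestrict]
    have step1 : ∑ p ∈ (range N ×ˢ range N).filter P, ∑ e ∈ G3 p, |s e.1 * t e.2|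
        ≤ ∑ p ∈ (range N ×ˢ range N).filter P,
            M * (((A p.1).card : ℝ) * (((2:ℝ)⁻¹)^p.1 * ((2:ℝ)⁻¹)^p.2)
              + ((Bf p.2).card : ℝ) * (((2:ℝ)⁻¹)^p.1 * ((2:ℝ)⁻¹)^p.2)) := by
      refine Finset.sum_le_sum fun p _ => ?_
      refine le_trans (hinner p) ?_
      have := mul_le_mul_of_nonneg_right (hcard p)
        (show (0:ℝ) ≤ ((2:ℝ)⁻¹)^p.1 * ((2:ℝ)⁻¹)^p.2 by positivity)
      calc ((G3 p).card : ℝ) * (((2:ℝ)⁻¹)^p.1 * ((2:ℝ)⁻¹)^p.2)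
          ≤ M * (((A p.1).card : ℝ) + ((Bf p.2).card : ℝ)) * (((2:ℝ)⁻¹)^p.1 * ((2:ℝ)⁻¹)^p.2) := this
        _ = M * (((A p.1).card : ℝ) * (((2:ℝ)⁻¹)^p.1 * ((2:ℝ)⁻¹)^p.2)
              + ((Bf p.2).card : ℝ) * (((2:ℝ)⁻¹)^p.1 * ((2:ℝ)⁻¹)^p.2)) := by ring
    refine le_trans step1 ?_
    rw [← Finset.mul_sum, Finset.sum_add_distrib]
    have hT1 : ∑ p ∈ (range N ×ˢ range N).filter P,
        ((A p.1).card : ℝ) * (((2:ℝ)⁻¹)^p.1 * ((2:ℝ)⁻¹)^p.2) ≤ 16 / lam := by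
      refine T_bound N lam hlam P (fun k => ((A k).card : ℝ)) (fun k => Nat.cast_nonneg _)
        hband1 ?_
      exact quad_bound s hs1 N
    have hT2 : ∑ p ∈ (range N ×ˢ range N).filter P,
        ((Bf p.2).card : ℝ) * (((2:ℝ)⁻¹)^p.1 * ((2:ℝ)⁻¹)^p.2) ≤ 16 / lam := by
      have hswap : ∑ p ∈ (range N ×ˢ range N).filter P,
          ((Bf p.2).card : ℝ) * (((2:ℝ)⁻¹)^p.1 * ((2:ℝ)⁻¹)^p.2)
          = ∑ q ∈ (range N ×ˢ range N).filter (fun q => P (q.2, q.1)),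
            ((Bf q.1).card : ℝ) * (((2:ℝ)⁻¹)^q.1 * ((2:ℝ)⁻¹)^q.2) := by
        refine Finset.sum_nbij' Prod.swap Prod.swap ?_ ?_ ?_ ?_ ?_
        · intro p hp
          rw [Finset.mem_filter] at hp ⊢
          rw [Finset.mem_product] at hp ⊢
          exact ⟨⟨hp.1.2, hp.1.1⟩, by simpa using hp.2⟩
        · intro q hq
          rw [Finset.mem_filter] at hq ⊢
          rw [Finset.mem_product] at hq ⊢
          exact ⟨⟨hq.1.2, hq.1.1⟩, hq.2⟩
        · intro p _; rfl
        · intro q _; rfl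
        · intro p _
          simp only [Prod.fst_swap, Prod.snd_swap]
          ring
      rw [hswap]
      refine T_bound N lam hlam (fun q => P (q.2, q.1)) (fun l => ((Bf l).card : ℝ))
        (fun l => Nat.cast_nonneg _) (fun k l hp => hband2 k l (by exact hp)) ?_
      exact quad_bound t ht1 N
    calc M * (∑ p ∈ (range N ×ˢ range N).filter P,
            ((A p.1).card : ℝ) * (((2:ℝ)⁻¹)^p.1 * ((2:ℝ)⁻¹)^p.2)
          + ∑ p ∈ (range N ×ˢ range N).filter P,
            ((Bf p.2).card : ℝ) * (((2:ℝ)⁻¹)^p.1 * ((2:ℝ)⁻¹)^p.2))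
        ≤ M * (16 / lam + 16 / lam) := by
          refine mul_le_mul_of_nonneg_left (add_le_add hT1 hT2) hM.le
      _ = 32 * (M / lam) := by field_simp; ring
  -- total
  rw [hsplit]
  have h32 : 32 * (M / lam) = 32 * Real.sqrt (d * M) := by rw [hMlam]
  have hld : lam * d = Real.sqrt (d * M) := hlamd
  calc (∑ e ∈ E₁.filter fun e => |t e.2| ≤ lam * |s e.1|, |s e.1 * t e.2|)
      + (∑ e ∈ (E₁.filter fun e => ¬ |t e.2| ≤ lam * |s e.1|).filter
            fun e => |s e.1| ≤ lam * |t e.2|, |s e.1 * t e.2|)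
      + (∑ e ∈ S₃, |s e.1 * t e.2|)
      ≤ lam * d + (lam * d) + 32 * (M / lam) := by
        exact add_le_add (add_le_add hB1 hB2) hB3
    _ = 34 * Real.sqrt (d * M) := by rw [hld, h32]; ring

theorem stmt18 :
    ∃ C : ℝ, 0 < C ∧
      ∀ (V : Type) [Fintype V] (G : SimpleGraph V) (d : ℕ),
        (∀ v, G.degree v ≤ d) →
        ∀ p : ℝ, 1 ≤ p →
        ∀ M : ℝ,
          M = sSup {x | ∃ I : Finset V, I.Nonempty ∧
            x = min p (((I ×ˢ I).filter fun e => G.Adj e.1 e.2).card : ℝ) / I.card} →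
        ∀ E₁ : Finset (V × V), (∀ e ∈ E₁, G.Adj e.1 e.2) → (E₁.card : ℝ) ≤ p →
        ∀ s t : V → ℝ, ∑ v, s v ^ 2 ≤ 1 → ∑ v, t v ^ 2 ≤ 1 →
          ∑ e ∈ E₁, |s e.1 * t e.2| ≤ C * Real.sqrt (d * M) := by
  refine ⟨34, by norm_num, ?_⟩
  intro V _ G d hdeg p hp M hMdef E₁ hE₁adj hE₁card s t hs1 ht1
  -- trivial case : E₁ empty
  rcases E₁.eq_empty_or_nonempty with rfl | hne
  · simp only [Finset.sum_empty]
    positivity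
  -- the sup set is bounded above by p
  set SS := {x | ∃ I : Finset V, I.Nonempty ∧
      x = min p (((I ×ˢ I).filter fun e => G.Adj e.1 e.2).card : ℝ) / I.card} with hSS
  have hbdd : BddAbove SS := by
    refine ⟨p, ?_⟩
    rintro x ⟨I, hI, rfl⟩
    have hI1 : (1:ℝ) ≤ I.card := by exact_mod_cast Finset.card_pos.mpr hI
    have h0 : (0:ℝ) ≤ min p (((I ×ˢ I).filter fun e => G.Adj e.1 e.2).card : ℝ) :=
      le_min (by linarith) (Nat.cast_nonneg _)
    calc min p (((I ×ˢ I).filter fun e => G.Adj e.1 e.2).card : ℝ) / I.card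
        ≤ min p (((I ×ˢ I).filter fun e => G.Adj e.1 e.2).card : ℝ) / 1 := by
          apply div_le_div_of_nonneg_left h0 (by norm_num) hI1
        _ = min p _ := div_one _
        _ ≤ p := min_le_left _ _
  have hmemle : ∀ x ∈ SS, x ≤ M := fun x hx => hMdef ▸ le_csSup hbdd hx
  -- M ≥ 1/2 using an edge of E₁
  obtain ⟨e₀, he₀⟩ := hne
  have hadj₀ := hE₁adj e₀ he₀
  have hne₀ : e₀.1 ≠ e₀.2 := G.ne_of_adj hadj₀
  have hMhalf : (1:ℝ)/2 ≤ M := by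
    set I₀ : Finset V := {e₀.1, e₀.2} with hI₀
    have hI₀ne : I₀.Nonempty := ⟨e₀.1, by simp [hI₀]⟩
    have hI₀card : (I₀.card : ℝ) = 2 := by
      rw [hI₀, Finset.card_insert_of_notMem (by simp [hne₀]), Finset.card_singleton]
      norm_num
    have hmem : (e₀.1, e₀.2) ∈ (I₀ ×ˢ I₀).filter fun e => G.Adj e.1 e.2 := by
      rw [Finset.mem_filter, Finset.mem_product]
      exact ⟨⟨by simp [hI₀], by simp [hI₀]⟩, hadj₀⟩
    have hc1 : (1:ℝ) ≤ (((I₀ ×ˢ I₀).filter fun e => G.Adj e.1 e.2).card : ℝ) := by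
      exact_mod_cast Finset.card_pos.mpr ⟨_, hmem⟩
    have hx : min p (((I₀ ×ˢ I₀).filter fun e => G.Adj e.1 e.2).card : ℝ) / I₀.card ∈ SS :=
      ⟨I₀, hI₀ne, rfl⟩
    have := hmemle _ hx
    rw [hI₀card] at this
    have hminge : (1:ℝ) ≤ min p (((I₀ ×ˢ I₀).filter fun e => G.Adj e.1 e.2).card : ℝ) :=
      le_min hp hc1
    linarith
  have hM : 0 < M := by linarith
  -- d ≥ 1
  have hd1 : 1 ≤ d := by
    have h1 : 0 < G.degree e₀.1 := by
      rw [SimpleGraph.degree_pos_iff_exists_adj]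
      exact ⟨e₀.2, hadj₀⟩
    exact le_trans h1 (hdeg e₀.1)
  have hd : (0:ℝ) < d := by exact_mod_cast lt_of_lt_of_le Nat.one_pos hd1
  -- fiber counting : number of edges with given first vertex ≤ d
  have hfst : ∀ v : V, ((E₁.filter fun e => e.1 = v).card : ℝ) ≤ d := by
    intro v
    have hsub : (E₁.filter fun e => e.1 = v).card ≤ G.degree v := by
      rw [SimpleGraph.degree]
      apply Finset.card_le_card_of_injOn (fun e => e.2)
      · intro e he
        rw [Finset.mem_coe, Finset.mem_filter] at he
        rw [Finset.mem_coe, SimpleGraph.mem_neighborFinset]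
        exact he.2 ▸ hE₁adj e he.1
      · intro a ha b hb hab
        rw [Finset.coe_filter, Set.mem_setOf_eq] at ha hb
        exact Prod.ext (ha.2.trans hb.2.symm) hab
    calc ((E₁.filter fun e => e.1 = v).card : ℝ) ≤ (G.degree v : ℝ) := by exact_mod_cast hsub
      _ ≤ d := by exact_mod_cast hdeg v
  have hsnd : ∀ v : V, ((E₁.filter fun e => e.2 = v).card : ℝ) ≤ d := by
    intro v
    have hsub : (E₁.filter fun e => e.2 = v).card ≤ G.degree v := by
      rw [SimpleGraph.degree]
      apply Finset.card_le_card_of_injOn (fun e => e.1)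
      · intro e he
        rw [Finset.mem_coe, Finset.mem_filter] at he
        rw [Finset.mem_coe, SimpleGraph.mem_neighborFinset]
        exact (he.2 ▸ hE₁adj e he.1).symm
      · intro a ha b hb hab
        rw [Finset.coe_filter, Set.mem_setOf_eq] at ha hb
        exact Prod.ext hab (ha.2.trans hb.2.symm)
    calc ((E₁.filter fun e => e.2 = v).card : ℝ) ≤ (G.degree v : ℝ) := by exact_mod_cast hsub
      _ ≤ d := by exact_mod_cast hdeg v
  -- degree-weighted sums
  have hds : ∑ e ∈ E₁, s e.1 ^ 2 ≤ d := by
    have hfib : ∑ e ∈ E₁, s e.1 ^ 2 = ∑ v, ∑ e ∈ E₁.filter fun e => e.1 = v, s e.1 ^ 2 :=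
      (Finset.sum_fiberwise E₁ (fun e => e.1) (fun e => s e.1 ^ 2)).symm
    rw [hfib]
    have hb : ∀ v ∈ (univ : Finset V), ∑ e ∈ E₁.filter fun e => e.1 = v, s e.1 ^ 2
        ≤ d * s v ^ 2 := by
      intro v _
      have : ∑ e ∈ E₁.filter fun e => e.1 = v, s e.1 ^ 2
          = ((E₁.filter fun e => e.1 = v).card : ℝ) * s v ^ 2 := by
        rw [Finset.sum_congr rfl fun e he => by
          rw [(Finset.mem_filter.mp he).2], Finset.sum_const, nsmul_eq_mul]
      rw [this]
      exact mul_le_mul_of_nonneg_right (hfst v) (sq_nonneg _)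
    calc ∑ v, ∑ e ∈ E₁.filter fun e => e.1 = v, s e.1 ^ 2
        ≤ ∑ v, d * s v ^ 2 := Finset.sum_le_sum hb
      _ = d * ∑ v, s v ^ 2 := (Finset.mul_sum _ _ _).symm
      _ ≤ d * 1 := mul_le_mul_of_nonneg_left hs1 hd.le
      _ = d := mul_one _
  have hdt : ∑ e ∈ E₁, t e.2 ^ 2 ≤ d := by
    have hfib : ∑ e ∈ E₁, t e.2 ^ 2 = ∑ v, ∑ e ∈ E₁.filter fun e => e.2 = v, t e.2 ^ 2 :=
      (Finset.sum_fiberwise E₁ (fun e => e.2) (fun e => t e.2 ^ 2)).symm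
    rw [hfib]
    have hb : ∀ v ∈ (univ : Finset V), ∑ e ∈ E₁.filter fun e => e.2 = v, t e.2 ^ 2
        ≤ d * t v ^ 2 := by
      intro v _
      have : ∑ e ∈ E₁.filter fun e => e.2 = v, t e.2 ^ 2
          = ((E₁.filter fun e => e.2 = v).card : ℝ) * t v ^ 2 := by
        rw [Finset.sum_congr rfl fun e he => by
          rw [(Finset.mem_filter.mp he).2], Finset.sum_const, nsmul_eq_mul]
      rw [this]
      exact mul_le_mul_of_nonneg_right (hsnd v) (sq_nonneg _)
    calc ∑ v, ∑ e ∈ E₁.filter fun e => e.2 = v, t e.2 ^ 2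
        ≤ ∑ v, d * t v ^ 2 := Finset.sum_le_sum hb
      _ = d * ∑ v, t v ^ 2 := (Finset.mul_sum _ _ _).symm
      _ ≤ d * 1 := mul_le_mul_of_nonneg_left ht1 hd.le
      _ = d := mul_one _
  -- the key counting bound via M
  have hcnt : ∀ A B : Finset V, ((E₁.filter fun e => e.1 ∈ A ∧ e.2 ∈ B).card : ℝ)
      ≤ M * (A.card + B.card) := by
    intro A B
    rcases (A ∪ B).eq_empty_or_nonempty with hK | hK
    · have hA : A = ∅ := Finset.union_eq_empty.mp hK |>.1
      have : E₁.filter (fun e => e.1 ∈ A ∧ e.2 ∈ B) = ∅ := by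
        apply Finset.filter_false_of_mem
        intro e _
        simp [hA]
      rw [this]
      simp only [Finset.card_empty, Nat.cast_zero]
      positivity
    · set K := A ∪ B with hK'
      have hKcard : (0:ℝ) < K.card := by exact_mod_cast Finset.card_pos.mpr hK
      -- the filter is inside the G-edge count of K
      have hsub : E₁.filter (fun e => e.1 ∈ A ∧ e.2 ∈ B)
          ⊆ (K ×ˢ K).filter fun e => G.Adj e.1 e.2 := by
        intro e he
        rw [Finset.mem_filter] at he ⊢
        rw [Finset.mem_product]
        exact ⟨⟨Finset.mem_union_left _ he.2.1, Finset.mem_union_right _ he.2.2⟩,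
          hE₁adj e he.1⟩
      have hle1 : ((E₁.filter fun e => e.1 ∈ A ∧ e.2 ∈ B).card : ℝ)
          ≤ min p (((K ×ˢ K).filter fun e => G.Adj e.1 e.2).card : ℝ) := by
        refine le_min ?_ ?_
        · have hcc : ((E₁.filter fun e => e.1 ∈ A ∧ e.2 ∈ B).card : ℝ) ≤ (E₁.card : ℝ) := by
            exact_mod_cast Finset.card_filter_le _ _
          linarith
        · exact_mod_cast Finset.card_le_card hsub
      have hxmem : min p (((K ×ˢ K).filter fun e => G.Adj e.1 e.2).card : ℝ) / K.card ∈ SS :=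
        ⟨K, hK, rfl⟩
      have hxM := hmemle _ hxmem
      have : min p (((K ×ˢ K).filter fun e => G.Adj e.1 e.2).card : ℝ) ≤ M * K.card := by
        rw [div_le_iff₀ hKcard] at hxM
        linarith
      have hKle : (K.card : ℝ) ≤ A.card + B.card := by
        exact_mod_cast Finset.card_union_le A B
      calc ((E₁.filter fun e => e.1 ∈ A ∧ e.2 ∈ B).card : ℝ)
          ≤ M * K.card := le_trans hle1 this
        _ ≤ M * (A.card + B.card) := mul_le_mul_of_nonneg_left hKle hM.le
  exact core E₁ s t d M hd hM hs1 ht1 hds hdt hcnt
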